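/- Let G be a finite graph and 𝒫 any set of profiles of clique separations of G. For every pair P, P' of distinguishable profiles in 𝒫 let A_{P,P'} = {a : a is a clique separation of G that distinguishes P and P' efficiently}. Then the family of these sets A_{P,P'} splinters (in the universe of separations of G). -/
import Mathlib


/-!
For any set of profiles of clique separations of a finite graph `G`, the
family of the sets `A_{P,P'}` of clique separations efficiently
distinguishing a pair of distinguishable profiles splinters in the universe
of separations of `G`.
-/

variable {V : Type*} [Fintype V] [DecidableEq V]

/-- An oriented separation-candidate of a graph on `V`: a pair of vertex sets. -/
abbrev GSep (V : Type*) := Finset V × Finset V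

/-- The involution `(A,B) ↦ (B,A)`. -/
def sepInv (p : GSep V) : GSep V := (p.2, p.1)

/-- The partial order `(A,B) ≤ (C,D)` iff `A ⊆ C` and `B ⊇ D`. -/
def sepLE (p q : GSep V) : Prop := p.1 ⊆ q.1 ∧ q.2 ⊆ p.2

/-- Strict version of `sepLE`. -/
def sepLT (p q : GSep V) : Prop := sepLE p q ∧ p ≠ q

/-- The join `(A,B) ∨ (C,D) = (A ∪ C, B ∩ D)`. -/
def sepJoin (p q : GSep V) : GSep V := (p.1 ∪ q.1, p.2 ∩ q.2)

/-- The meet `(A,B) ∧ (C,D) = (A ∩ C, B ∪ D)`. -/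
def sepMeet (p q : GSep V) : GSep V := (p.1 ∩ q.1, p.2 ∪ q.2)

/-- The order `|(A,B)| = |A ∩ B|`. -/
def sepOrder (p : GSep V) : ℕ := (p.1 ∩ p.2).card

/-- `(A,B)` is a separation of `G`: `A ∪ B = V` and `G` has no edge between
`A \ B` and `B \ A`. -/
def IsSep (G : SimpleGraph V) (p : GSep V) : Prop :=
  p.1 ∪ p.2 = Finset.univ ∧
    ∀ a b : V, G.Adj a b → a ∈ p.1 → a ∉ p.2 → b ∈ p.2 → b ∉ p.1 → False

/-- Two separations are nested if they have `sepLE`-comparable orientations. -/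
def sepNested (p q : GSep V) : Prop :=
  sepLE p q ∨ sepLE p (sepInv q) ∨ sepLE (sepInv p) q ∨ sepLE (sepInv p) (sepInv q)

/-- `c` is a corner separation of `p` and `q`: a join of orientations of `p`
and `q`, or the involution of such a join. -/
def sepIsCorner (c p q : GSep V) : Prop :=
  ∃ p' q', (p' = p ∨ p' = sepInv p) ∧ (q' = q ∨ q' = sepInv q) ∧
    (c = sepJoin p' q' ∨ c = sepInv (sepJoin p' q'))

/-- `(A,B)` is a clique separation of `G`: a separation whose separator
`A ∩ B` induces a complete subgraph. -/
def IsCliqueSep (G : SimpleGraph V) (p : GSep V) : Prop :=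
  IsSep G p ∧ G.IsClique ↑(p.1 ∩ p.2)

/-- A profile of clique separations of `G` of order `k`: a consistent
orientation `P` of the set of clique separations of order `< k` such that for
all `r, s ∈ P` the meet `(sepInv r) ∧ (sepInv s)` is not in `P`. -/
def CliqueProfile (G : SimpleGraph V) (k : ℕ) (P : Set (GSep V)) : Prop :=
  (∀ p ∈ P, IsCliqueSep G p ∧ sepOrder p < k) ∧
  (∀ p : GSep V, IsCliqueSep G p → sepOrder p < k →
    (p ∈ P ∨ sepInv p ∈ P) ∧ (p ∈ P → sepInv p ∈ P → p = sepInv p)) ∧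
  (∀ r ∈ P, ∀ s ∈ P, ¬ sepLT (sepInv r) s) ∧
  (∀ r ∈ P, ∀ s ∈ P, sepMeet (sepInv r) (sepInv s) ∉ P)

/-- The clique separation `p` distinguishes the profiles `P` and `P'`. -/
def cliqueDistinguishes (G : SimpleGraph V) (p : GSep V)
    (P P' : Set (GSep V)) : Prop :=
  IsCliqueSep G p ∧ ((p ∈ P ∧ sepInv p ∈ P') ∨ (sepInv p ∈ P ∧ p ∈ P'))

/-- The clique separation `p` distinguishes `P` and `P'` efficiently: it does
so and has minimum order among all clique separations of `G` distinguishing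
`P` and `P'`. -/
def cliqueEffDist (G : SimpleGraph V) (p : GSep V)
    (P P' : Set (GSep V)) : Prop :=
  cliqueDistinguishes G p P P' ∧
    ∀ q : GSep V, cliqueDistinguishes G q P P' → sepOrder p ≤ sepOrder q

/-- A family `A` of subsets of the universe of separations of `G` splinters
if for all `i`, `j` and every crossing pair `a ∈ A i \ A j`, `b ∈ A j \ A i`,
at least one corner separation of `a` and `b` lies in `A i ∪ A j`. -/
def sepSplinters {I : Type*} (A : I → Set (GSep V)) : Prop :=
  ∀ i j : I, ∀ a ∈ A i, a ∉ A j → ∀ b ∈ A j, b ∉ A i → ¬ sepNested a b →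
    ∃ c, sepIsCorner c a b ∧ c ∈ A i ∪ A j

section Aux

variable {G : SimpleGraph V}

lemma sepInv_inv (p : GSep V) : sepInv (sepInv p) = p := rfl

lemma sepOrder_inv (p : GSep V) : sepOrder (sepInv p) = sepOrder p := by
  simp [sepOrder, sepInv, Finset.inter_comm]

lemma isSep_inv {p : GSep V} (h : IsSep G p) : IsSep G (sepInv p) := by
  obtain ⟨h1, h2⟩ := h
  refine ⟨by rw [show (sepInv p).1 ∪ (sepInv p).2 = p.2 ∪ p.1 from rfl,
    Finset.union_comm]; exact h1, ?_⟩
  intro x y hadj hx1 hx2 hy1 hy2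
  exact h2 y x hadj.symm hy1 hy2 hx1 hx2

lemma isCliqueSep_inv {p : GSep V} (h : IsCliqueSep G p) : IsCliqueSep G (sepInv p) := by
  refine ⟨isSep_inv h.1, ?_⟩
  have he : (sepInv p).1 ∩ (sepInv p).2 = p.1 ∩ p.2 := Finset.inter_comm _ _
  rw [he]; exact h.2

lemma clique_side {q : GSep V} (hq : IsSep G q) {s : Finset V} (hs : G.IsClique ↑s) :
    s ⊆ q.1 ∨ s ⊆ q.2 := by
  by_contra h
  push_neg at h
  obtain ⟨h1, h2⟩ := h
  obtain ⟨u, hu, hu1⟩ := Finset.not_subset.mp h1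
  obtain ⟨w, hw, hw2⟩ := Finset.not_subset.mp h2
  have hmem : ∀ v : V, v ∈ q.1 ∨ v ∈ q.2 := fun v =>
    Finset.mem_union.mp (by rw [hq.1]; exact Finset.mem_univ v)
  have hu2 : u ∈ q.2 := (hmem u).resolve_left hu1
  have hw1 : w ∈ q.1 := (hmem w).resolve_right hw2
  have hne : w ≠ u := fun he => hu1 (he ▸ hw1)
  exact hq.2 w u (hs (Finset.mem_coe.mpr hw) (Finset.mem_coe.mpr hu) hne) hw1 hw2 hu2 hu1

lemma isSep_join {p q : GSep V} (hp : IsSep G p) (hq : IsSep G q) :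
    IsSep G (sepJoin p q) := by
  have hpv : ∀ v : V, v ∈ p.1 ∨ v ∈ p.2 := fun v =>
    Finset.mem_union.mp (by rw [hp.1]; exact Finset.mem_univ v)
  have hqv : ∀ v : V, v ∈ q.1 ∨ v ∈ q.2 := fun v =>
    Finset.mem_union.mp (by rw [hq.1]; exact Finset.mem_univ v)
  constructor
  · apply Finset.eq_univ_of_forall
    intro v
    simp only [sepJoin, Finset.mem_union, Finset.mem_inter]
    rcases hpv v with h | h
    · tauto
    · rcases hqv v with h' | h' <;> tauto
  · intro x y hadj hx1 hx2 hy1 hy2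
    simp only [sepJoin, Finset.mem_union, Finset.mem_inter] at hx1 hx2 hy1 hy2
    by_cases hxp2 : x ∈ p.2
    · have hxq2 : x ∉ q.2 := fun h => hx2 ⟨hxp2, h⟩
      have hxq1 : x ∈ q.1 := (hqv x).resolve_right hxq2
      exact hq.2 x y hadj hxq1 hxq2 hy1.2 (fun h => hy2 (Or.inr h))
    · have hxp1 : x ∈ p.1 := (hpv x).resolve_right hxp2
      exact hp.2 x y hadj hxp1 hxp2 hy1.1 (fun h => hy2 (Or.inl h))

lemma sepNested_inv_left {p q : GSep V} : sepNested (sepInv p) q ↔ sepNested p q := by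
  simp only [sepNested, sepInv_inv]; tauto

lemma sepNested_inv_right {p q : GSep V} : sepNested p (sepInv q) ↔ sepNested p q := by
  simp only [sepNested, sepInv_inv]; tauto

lemma dist_symm {q : GSep V} {R R' : Set (GSep V)} :
    cliqueDistinguishes G q R R' ↔ cliqueDistinguishes G q R' R := by
  unfold cliqueDistinguishes; tauto

lemma effDist_symm {q : GSep V} {R R' : Set (GSep V)} :
    cliqueEffDist G q R R' ↔ cliqueEffDist G q R' R := by
  unfold cliqueEffDist
  constructor <;> rintro ⟨h1, h2⟩
  · exact ⟨dist_symm.mp h1, fun r hr => h2 r (dist_symm.mpr hr)⟩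
  · exact ⟨dist_symm.mpr h1, fun r hr => h2 r (dist_symm.mp hr)⟩

/-- The core lemma: if `r ∈ R`, `r* ∈ R'` is an efficient distinguisher of the
profiles `R, R'`, `s` is a clique separation crossing `r` whose separator lies in
`r.2` while `r`'s separator lies in `s.2`, then one of the corner separations
`r* ∨ s`, `r* ∨ s*` efficiently distinguishes `R` and `R'`. -/
lemma core_lemma (G : SimpleGraph V) {k k' : ℕ} {R R' : Set (GSep V)}
    (hR : CliqueProfile G k R) (hR' : CliqueProfile G k' R')
    {r s : GSep V}
    (ha : IsCliqueSep G r) (hb : IsCliqueSep G s)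
    (hX : r.1 ∩ r.2 ⊆ s.2) (hY : s.1 ∩ s.2 ⊆ r.2)
    (haR : r ∈ R) (haR' : sepInv r ∈ R')
    (hcross : ¬ sepNested r s)
    (heff : ∀ q, cliqueDistinguishes G q R R' → sepOrder r ≤ sepOrder q) :
    ∃ c : GSep V, (c = sepJoin (sepInv r) s ∨ c = sepJoin (sepInv r) (sepInv s)) ∧
      cliqueEffDist G c R R' := by
  obtain ⟨A, B⟩ := r
  obtain ⟨C, D⟩ := s
  have hX' : ∀ v, v ∈ A → v ∈ B → v ∈ D := fun v h1 h2 => hX (Finset.mem_inter.mpr ⟨h1, h2⟩)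
  have hY' : ∀ v, v ∈ C → v ∈ D → v ∈ B := fun v h1 h2 => hY (Finset.mem_inter.mpr ⟨h1, h2⟩)
  have hCDu : C ∪ D = Finset.univ := hb.1.1
  have hCDv : ∀ v : V, v ∈ C ∨ v ∈ D := fun v =>
    Finset.mem_union.mp (by rw [hCDu]; exact Finset.mem_univ v)
  have hsep1 : (B ∪ C) ∩ (A ∩ D) = A ∩ B := by
    ext v
    simp only [Finset.mem_inter, Finset.mem_union]
    have h1 := hX' v; have h2 := hY' v
    tauto
  have hsepd : (B ∪ D) ∩ (A ∩ C) ⊆ A ∩ B := by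
    intro v hv
    simp only [Finset.mem_inter, Finset.mem_union] at hv ⊢
    have h2 := hY' v
    tauto
  have cliquec1 : IsCliqueSep G ((B ∪ C, A ∩ D) : GSep V) := by
    refine ⟨isSep_join (isSep_inv ha.1) hb.1, ?_⟩
    show G.IsClique ↑((B ∪ C) ∩ (A ∩ D))
    rw [hsep1]
    exact ha.2
  have cliqued : IsCliqueSep G ((B ∪ D, A ∩ C) : GSep V) := by
    refine ⟨isSep_join (isSep_inv ha.1) (isSep_inv hb.1), ?_⟩
    show G.IsClique ↑((B ∪ D) ∩ (A ∩ C))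
    exact SimpleGraph.IsClique.subset (Finset.coe_subset.mpr hsepd) ha.2
  have ord1 : sepOrder ((B ∪ C, A ∩ D) : GSep V) = sepOrder ((A, B) : GSep V) := by
    show ((B ∪ C) ∩ (A ∩ D)).card = (A ∩ B).card
    rw [hsep1]
  have ordd : sepOrder ((B ∪ D, A ∩ C) : GSep V) ≤ sepOrder ((A, B) : GSep V) :=
    Finset.card_le_card hsepd
  have kbound : sepOrder ((A, B) : GSep V) < k := (hR.1 _ haR).2
  have kbound' : sepOrder ((A, B) : GSep V) < k' := by
    have h := (hR'.1 _ haR').2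
    rwa [sepOrder_inv] at h
  by_cases hd1 : cliqueDistinguishes G ((B ∪ C, A ∩ D) : GSep V) R R'
  · exact ⟨_, Or.inl rfl, hd1, fun q hq => le_trans (le_of_eq ord1) (heff q hq)⟩
  by_cases hd2 : cliqueDistinguishes G ((B ∪ D, A ∩ C) : GSep V) R R'
  · exact ⟨_, Or.inr rfl, hd2, fun q hq => le_trans ordd (heff q hq)⟩
  exfalso
  -- Forced orientations of the corner `c1 = (B ∪ C, A ∩ D)` in `R` and `R'`.
  have hc1R : sepInv ((B ∪ C, A ∩ D) : GSep V) ∈ R := by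
    rcases (hR.2.1 _ cliquec1 (lt_of_le_of_lt (le_of_eq ord1) kbound)).1 with h | h
    · exfalso
      have hcons := hR.2.2.1 _ h ((A, B) : GSep V) haR
      have hle : sepLE (sepInv ((B ∪ C, A ∩ D) : GSep V)) ((A, B) : GSep V) :=
        ⟨Finset.inter_subset_left, Finset.subset_union_left⟩
      have heq : sepInv ((B ∪ C, A ∩ D) : GSep V) = ((A, B) : GSep V) := by
        by_contra hne; exact hcons ⟨hle, hne⟩
      apply hcross
      have h1 : A ∩ D = A := congrArg Prod.fst heq
      have h2 : B ∪ C = B := congrArg Prod.snd heq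
      exact Or.inr (Or.inl ⟨by rw [← h1]; exact Finset.inter_subset_right,
        by rw [← h2]; exact Finset.subset_union_right⟩)
    · exact h
  have hc1R' : sepInv ((B ∪ C, A ∩ D) : GSep V) ∈ R' := by
    rcases (hR'.2.1 _ cliquec1 (lt_of_le_of_lt (le_of_eq ord1) kbound')).1 with h | h
    · exact absurd ⟨cliquec1, Or.inr ⟨hc1R, h⟩⟩ hd1
    · exact h
  -- Forced orientations of the corner `d = (B ∪ D, A ∩ C)` in `R` and `R'`.
  have hdR : sepInv ((B ∪ D, A ∩ C) : GSep V) ∈ R := by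
    rcases (hR.2.1 _ cliqued (lt_of_le_of_lt ordd kbound)).1 with h | h
    · exfalso
      have hcons := hR.2.2.1 _ h ((A, B) : GSep V) haR
      have hle : sepLE (sepInv ((B ∪ D, A ∩ C) : GSep V)) ((A, B) : GSep V) :=
        ⟨Finset.inter_subset_left, Finset.subset_union_left⟩
      have heq : sepInv ((B ∪ D, A ∩ C) : GSep V) = ((A, B) : GSep V) := by
        by_contra hne; exact hcons ⟨hle, hne⟩
      apply hcross
      have h1 : A ∩ C = A := congrArg Prod.fst heq
      have h2 : B ∪ D = B := congrArg Prod.snd heq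
      exact Or.inl ⟨by rw [← h1]; exact Finset.inter_subset_right,
        by rw [← h2]; exact Finset.subset_union_right⟩
    · exact h
  have hdR' : sepInv ((B ∪ D, A ∩ C) : GSep V) ∈ R' := by
    rcases (hR'.2.1 _ cliqued (lt_of_le_of_lt ordd kbound')).1 with h | h
    · exact absurd ⟨cliqued, Or.inr ⟨hdR, h⟩⟩ hd2
    · exact h
  -- The profile property of `R'` applied to the two corner orientations yields
  -- `(B, A) ∉ R'`, contradicting `sepInv (A, B) ∈ R'`.
  have hprop := hR'.2.2.2 _ hc1R' _ hdR'
  rw [sepInv_inv, sepInv_inv] at hprop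
  have hmeet : sepMeet ((B ∪ C, A ∩ D) : GSep V) ((B ∪ D, A ∩ C) : GSep V)
      = ((B, A) : GSep V) := by
    unfold sepMeet
    refine Prod.ext ?_ ?_
    · show (B ∪ C) ∩ (B ∪ D) = B
      ext v
      simp only [Finset.mem_inter, Finset.mem_union]
      have h2 := hY' v
      tauto
    · show (A ∩ D) ∪ (A ∩ C) = A
      ext v
      simp only [Finset.mem_inter, Finset.mem_union]
      have h3 := hCDv v
      tauto
  rw [hmeet] at hprop
  exact hprop haR'

/-- Packaging: the corner produced by `core_lemma` is a corner of `a` and `b`. -/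
lemma assemble (G : SimpleGraph V) {k k' : ℕ} {R R' : Set (GSep V)} {a b r s : GSep V}
    (hR : CliqueProfile G k R) (hR' : CliqueProfile G k' R')
    (hra : r = a ∨ r = sepInv a) (hsb : s = b ∨ s = sepInv b)
    (hr : IsCliqueSep G r) (hs : IsCliqueSep G s)
    (hX : r.1 ∩ r.2 ⊆ s.2) (hY : s.1 ∩ s.2 ⊆ r.2)
    (hrR : r ∈ R) (hrR' : sepInv r ∈ R')
    (hcross : ¬ sepNested r s)
    (heff : ∀ q, cliqueDistinguishes G q R R' → sepOrder r ≤ sepOrder q) :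
    ∃ c, sepIsCorner c a b ∧ cliqueEffDist G c R R' := by
  obtain ⟨c, hc, heffc⟩ := core_lemma G hR hR' hr hs hX hY hrR hrR' hcross heff
  refine ⟨c, ?_, heffc⟩
  have hinv : sepInv r = a ∨ sepInv r = sepInv a := by
    rcases hra with rfl | rfl
    · exact Or.inr rfl
    · exact Or.inl rfl
  rcases hc with rfl | rfl
  · exact ⟨sepInv r, s, hinv, hsb, Or.inl rfl⟩
  · refine ⟨sepInv r, sepInv s, hinv, ?_, Or.inl rfl⟩
    rcases hsb with rfl | rfl
    · exact Or.inr rfl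
    · exact Or.inl rfl

end Aux

/-- **The family of the sets of efficient distinguishers of distinguishable
profiles of clique separations splinters.** -/
theorem clique_efficient_distinguishers_splinter (G : SimpleGraph V)
    (Ps : Set (Set (GSep V))) (hPs : ∀ P ∈ Ps, ∃ k, CliqueProfile G k P) :
    sepSplinters
      (fun pp : {pp : Set (GSep V) × Set (GSep V) // pp.1 ∈ Ps ∧ pp.2 ∈ Ps ∧
          ∃ c, cliqueDistinguishes G c pp.1 pp.2} =>
        {p | cliqueEffDist G p pp.1.1 pp.1.2}) := by
  intro i j a hai hanj b hbj hbni hcross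
  clear hanj hbni
  obtain ⟨kP, hP⟩ := hPs i.1.1 i.2.1
  obtain ⟨kP', hP'⟩ := hPs i.1.2 i.2.2.1
  have ha : cliqueEffDist G a i.1.1 i.1.2 := hai
  have hb : IsCliqueSep G b := hbj.1.1
  have haclique : IsCliqueSep G a := ha.1.1
  -- choose the orientation `s` of `b` whose big side contains `a`'s separator
  obtain ⟨s, hsmem, hsclique, hXs⟩ :
      ∃ s : GSep V, (s = b ∨ s = sepInv b) ∧ IsCliqueSep G s ∧ a.1 ∩ a.2 ⊆ s.2 := by
    rcases clique_side hb.1 haclique.2 with h | h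
    · exact ⟨sepInv b, Or.inr rfl, isCliqueSep_inv hb, h⟩
    · exact ⟨b, Or.inl rfl, hb, h⟩
  have hcross' : ¬ sepNested a s := by
    rcases hsmem with rfl | rfl
    · exact hcross
    · rw [sepNested_inv_right]; exact hcross
  -- the separator of `s` lies in one side of `a`
  have hYb : b.1 ∩ b.2 ⊆ a.1 ∨ b.1 ∩ b.2 ⊆ a.2 := clique_side haclique.1 hb.2
  have hYs : s.1 ∩ s.2 ⊆ a.1 ∨ s.1 ∩ s.2 ⊆ a.2 := by
    rcases hsmem with rfl | rfl
    · exact hYb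
    · have he : (sepInv b).1 ∩ (sepInv b).2 = b.1 ∩ b.2 := Finset.inter_comm _ _
      rw [he]; exact hYb
  rcases ha.1.2 with ⟨hm1, hm2⟩ | ⟨hm1, hm2⟩ <;> rcases hYs with hY | hY
  · -- `a ∈ P`, `a* ∈ P'`, separator of `s` in `a.1`; use `r = a*`, profiles `(P', P)`
    obtain ⟨c, hcor, hce⟩ := assemble G hP' hP (Or.inr rfl) hsmem
      (isCliqueSep_inv haclique) hsclique
      (by rw [show (sepInv a).1 ∩ (sepInv a).2 = a.1 ∩ a.2 from Finset.inter_comm _ _]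
          exact hXs)
      hY hm2 hm1
      (by rw [sepNested_inv_left]; exact hcross')
      (fun q hq => by rw [sepOrder_inv]; exact ha.2 q (dist_symm.mp hq))
    exact ⟨c, hcor, Or.inl (effDist_symm.mp hce)⟩
  · -- `a ∈ P`, `a* ∈ P'`, separator of `s` in `a.2`; use `r = a`, profiles `(P, P')`
    obtain ⟨c, hcor, hce⟩ := assemble G hP hP' (Or.inl rfl) hsmem
      haclique hsclique hXs hY hm1 hm2 hcross' ha.2
    exact ⟨c, hcor, Or.inl hce⟩
  · -- `a* ∈ P`, `a ∈ P'`, separator of `s` in `a.1`; use `r = a*`, profiles `(P, P')`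
    obtain ⟨c, hcor, hce⟩ := assemble G hP hP' (Or.inr rfl) hsmem
      (isCliqueSep_inv haclique) hsclique
      (by rw [show (sepInv a).1 ∩ (sepInv a).2 = a.1 ∩ a.2 from Finset.inter_comm _ _]
          exact hXs)
      hY hm1 hm2
      (by rw [sepNested_inv_left]; exact hcross')
      (fun q hq => by rw [sepOrder_inv]; exact ha.2 q hq)
    exact ⟨c, hcor, Or.inl hce⟩
  · -- `a* ∈ P`, `a ∈ P'`, separator of `s` in `a.2`; use `r = a`, profiles `(P', P)`
    obtain ⟨c, hcor, hce⟩ := assemble G hP' hP (Or.inl rfl) hsmem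
      haclique hsclique hXs hY hm2 hm1 hcross'
      (fun q hq => ha.2 q (dist_symm.mp hq))
    exact ⟨c, hcor, Or.inl (effDist_symm.mp hce)⟩
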